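/- Let V be an additive (abelian group)-valued k-functor and F any (abelian group)-valued k-functor. Then every extension of V by F is set-theoretically split: for every exact sequence 0 → F → E →^π V → 0 of (abelian group)-valued k-functors there exists a natural transformation σ : V → E of the underlying set-valued functors (not required to be additive) with π ∘ σ = id_V. -/

import Mathlib

universe u

open TensorProduct

/-- An (abelian group)-valued `k`-functor: a functor from commutative `k`-algebras
(in universe `u`) to abelian groups. -/
structure AbFunctor (k : Type u) [Field k] : Type (u + 1) where
  obj : ∀ (B : Type u) [CommRing B] [Algebra k B], Type u
  [grp : ∀ (B : Type u) [CommRing B] [Algebra k B], AddCommGroup (obj B)]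
  map : ∀ {B C : Type u} [CommRing B] [Algebra k B] [CommRing C] [Algebra k C],
    (B →ₐ[k] C) → (obj B →+ obj C)
  map_id : ∀ (B : Type u) [CommRing B] [Algebra k B],
    map (AlgHom.id k B) = AddMonoidHom.id (obj B)
  map_comp : ∀ {B C D : Type u} [CommRing B] [Algebra k B] [CommRing C] [Algebra k C]
    [CommRing D] [Algebra k D] (f : B →ₐ[k] C) (g : C →ₐ[k] D),
    map (g.comp f) = (map g).comp (map f)

attribute [instance] AbFunctor.grp

variable (k : Type u) [Field k]

/-- A morphism of (abelian group)-valued `k`-functors. -/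
structure AbHom (F G : AbFunctor k) where
  app : ∀ (B : Type u) [CommRing B] [Algebra k B], F.obj B →+ G.obj B
  naturality : ∀ {B C : Type u} [CommRing B] [Algebra k B] [CommRing C] [Algebra k C]
    (f : B →ₐ[k] C) (x : F.obj B), G.map f (app B x) = app C (F.map f x)

/-- A natural transformation of the underlying set-valued functors
(not required to be additive). -/
structure SetHom (F G : AbFunctor k) where
  app : ∀ (B : Type u) [CommRing B] [Algebra k B], F.obj B → G.obj B
  naturality : ∀ {B C : Type u} [CommRing B] [Algebra k B] [CommRing C] [Algebra k C]
    (f : B →ₐ[k] C) (x : F.obj B), G.map f (app B x) = app C (F.map f x)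

/-- An isomorphism of (abelian group)-valued `k`-functors. -/
structure AbIso (F G : AbFunctor k) where
  hom : AbHom k F G
  inv : AbHom k G F
  hom_inv : ∀ (B : Type u) [CommRing B] [Algebra k B] (x : F.obj B),
    inv.app B (hom.app B x) = x
  inv_hom : ∀ (B : Type u) [CommRing B] [Algebra k B] (x : G.obj B),
    hom.app B (inv.app B x) = x
/-- `𝔾_a^ι`, the direct sum of `ι` copies of the additive group functor,
`B ↦ ⊕_{i : ι} (B, +)`. -/
noncomputable def Ga (ι : Type u) : AbFunctor k where
  obj B _ _ := ι →₀ B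
  grp B _ _ := inferInstance
  map f := Finsupp.mapRange.addMonoidHom f.toRingHom.toAddMonoidHom
  map_id B _ _ := by
    ext x i
    simp [Finsupp.mapRange.addMonoidHom]
  map_comp f g := by
    ext x i
    simp [Finsupp.mapRange.addMonoidHom]
    erw [Finsupp.mapRange_single]
    try rfl
/-- A functor is strictly additive if it is isomorphic to `𝔾_a^α` for some
`α ∈ {0, 1, …, ∞}`. -/
def IsStrictlyAdditive (F : AbFunctor k) : Prop :=
  (∃ n : ℕ, Nonempty (AbIso k F (Ga k (ULift.{u} (Fin n))))) ∨
    Nonempty (AbIso k F (Ga k (ULift.{u} ℕ)))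
/-- `0 → F' → F → F'' → 0` is a short exact sequence of (abelian group)-valued
`k`-functors (exactness is objectwise). -/
structure IsShortExact {F' F F'' : AbFunctor k} (i : AbHom k F' F)
    (p : AbHom k F F'') : Prop where
  inj : ∀ (B : Type u) [CommRing B] [Algebra k B], Function.Injective (i.app B)
  surj : ∀ (B : Type u) [CommRing B] [Algebra k B], Function.Surjective (p.app B)
  exact : ∀ (B : Type u) [CommRing B] [Algebra k B] (x : F.obj B),
    p.app B x = 0 ↔ x ∈ Set.range (i.app B)
/-- A functor is additive if it admits a finite filtration with strictly additive
successive quotients; equivalently (and as formalized here), the class of additive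
functors is the smallest class containing the strictly additive functors and closed
under extensions with strictly additive quotients. -/
inductive IsAdditive : AbFunctor k → Prop
  | of_strict (F : AbFunctor k) : IsStrictlyAdditive k F → IsAdditive F
  | of_ext {F' F F'' : AbFunctor k} (i : AbHom k F' F) (p : AbHom k F F'') :
      IsShortExact k i p → IsAdditive F' → IsStrictlyAdditive k F'' → IsAdditive F
section Core

open scoped Classical

variable (k : Type u) [Field k] (ι : Type u)

/-- Identify `(Ga k ι).obj B` with `ι →₀ B`. -/
def toFs {B : Type u} [CommRing B] [Algebra k B] (x : (Ga k ι).obj B) : ι →₀ B := x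

variable {k ι} in
lemma toFs_inj {B : Type u} [CommRing B] [Algebra k B] {x y : (Ga k ι).obj B}
    (h : toFs k ι x = toFs k ι y) : x = y := h

noncomputable def rTr (S : Finset ι) : MvPolynomial ι k →ₐ[k] MvPolynomial ι k :=
  MvPolynomial.aeval fun j => if j ∈ S then MvPolynomial.X j else 0

noncomputable def uPt (S : Finset ι) : (Ga k ι).obj (MvPolynomial ι k) :=
  Finsupp.onFinset S (fun j => if j ∈ S then MvPolynomial.X j else 0)
    (fun j h => by by_contra hj; simp [hj] at h)

lemma uPt_apply (S : Finset ι) (j : ι) :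
    toFs k ι (uPt k ι S) j = if j ∈ S then MvPolynomial.X j else 0 := rfl

noncomputable def phiX {B : Type u} [CommRing B] [Algebra k B] (x : ι →₀ B) :
    MvPolynomial ι k →ₐ[k] B :=
  MvPolynomial.aeval fun j => x j

lemma Ga_map_apply {B C : Type u} [CommRing B] [Algebra k B] [CommRing C] [Algebra k C]
    (f : B →ₐ[k] C) (x : (Ga k ι).obj B) (j : ι) :
    toFs k ι ((Ga k ι).map f x) j = f (toFs k ι x j) := rfl

lemma Ga_map_support {B C : Type u} [CommRing B] [Algebra k B] [CommRing C] [Algebra k C]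
    (f : B →ₐ[k] C) (x : (Ga k ι).obj B) :
    (toFs k ι ((Ga k ι).map f x)).support ⊆ (toFs k ι x).support := by
  intro j hj
  rw [Finsupp.mem_support_iff] at hj ⊢
  intro h0
  exact hj (by rw [Ga_map_apply, h0, map_zero])

variable {k ι}

lemma rTr_comp {S T : Finset ι} (h : S ⊆ T) :
    (rTr k ι S).comp (rTr k ι T) = rTr k ι S := by
  apply MvPolynomial.algHom_ext
  intro j
  simp only [AlgHom.comp_apply, rTr, MvPolynomial.aeval_X]
  by_cases hj : j ∈ T
  · simp [hj, MvPolynomial.aeval_X]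
  · have hj' : j ∉ S := fun hh => hj (h hh)
    simp [hj, hj']

lemma map_rTr_uPt_le {S T : Finset ι} (h : S ⊆ T) :
    (Ga k ι).map (rTr k ι S) (uPt k ι T) = uPt k ι S := by
  apply toFs_inj
  apply Finsupp.ext
  intro j
  rw [Ga_map_apply, uPt_apply, uPt_apply]
  by_cases hj : j ∈ T
  · simp only [hj, if_true, rTr, MvPolynomial.aeval_X]
  · have hj' : j ∉ S := fun hh => hj (h hh)
    simp [hj, hj', rTr]

lemma map_rTr_uPt_ge {S T : Finset ι} (h : S ⊆ T) :
    (Ga k ι).map (rTr k ι T) (uPt k ι S) = uPt k ι S := by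
  apply toFs_inj
  apply Finsupp.ext
  intro j
  rw [Ga_map_apply, uPt_apply]
  by_cases hj : j ∈ S
  · simp only [hj, if_true, rTr, MvPolynomial.aeval_X, h hj]
  · simp [hj]

lemma phiX_comp_rTr {B : Type u} [CommRing B] [Algebra k B] {x : ι →₀ B} {S : Finset ι}
    (h : x.support ⊆ S) : (phiX k ι x).comp (rTr k ι S) = phiX k ι x := by
  apply MvPolynomial.algHom_ext
  intro j
  simp only [AlgHom.comp_apply, rTr, MvPolynomial.aeval_X, phiX]
  by_cases hj : j ∈ S
  · simp [hj, MvPolynomial.aeval_X]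
  · have hx : x j = 0 := Finsupp.notMem_support_iff.mp (fun hh => hj (h hh))
    simp [hj, hx]

lemma map_phiX_uPt {B : Type u} [CommRing B] [Algebra k B] {x : (Ga k ι).obj B} {S : Finset ι}
    (h : (toFs k ι x).support ⊆ S) : (Ga k ι).map (phiX k ι (toFs k ι x)) (uPt k ι S) = x := by
  apply toFs_inj
  apply Finsupp.ext
  intro j
  rw [Ga_map_apply, uPt_apply]
  by_cases hj : j ∈ S
  · simp [hj, phiX, MvPolynomial.aeval_X]
  · have hx : toFs k ι x j = 0 := Finsupp.notMem_support_iff.mp (fun hh => hj (h hh))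
    simp [hj, hx]

lemma phiX_map {B C : Type u} [CommRing B] [Algebra k B] [CommRing C] [Algebra k C]
    (g : B →ₐ[k] C) (x : (Ga k ι).obj B) :
    phiX k ι (toFs k ι ((Ga k ι).map g x)) = g.comp (phiX k ι (toFs k ι x)) := by
  apply MvPolynomial.algHom_ext
  intro j
  simp only [phiX, MvPolynomial.aeval_X, AlgHom.comp_apply]
  rw [Ga_map_apply]

end Core
section GaSection

variable {k : Type u} [Field k] {ι : Type u}

lemma rTr_comp' {S T : Finset ι} (h : S ⊆ T) :
    (rTr k ι T).comp (rTr k ι S) = rTr k ι S := by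
  classical
  apply MvPolynomial.algHom_ext
  intro j
  simp only [AlgHom.comp_apply, rTr, MvPolynomial.aeval_X]
  by_cases hj : j ∈ S
  · simp [hj, MvPolynomial.aeval_X, h hj]
  · simp [hj]

lemma ga_section (S : ℕ → Finset ι) (hS : ∀ {a b : ℕ}, a ≤ b → S a ⊆ S b)
    (hcov : ∀ t : Finset ι, ∃ n, t ⊆ S n)
    {F E : AbFunctor k} (i : AbHom k F E) (pi : AbHom k E (Ga k ι))
    (hex : IsShortExact k i pi) :
    ∃ σ : SetHom k (Ga k ι) E, ∀ (B : Type u) [CommRing B] [Algebra k B]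
      (x : (Ga k ι).obj B), pi.app B (σ.app B x) = x := by
  classical
  have hfex : ∀ n : ℕ, ∃ f, pi.app (MvPolynomial ι k) f = uPt k ι (S n) :=
    fun n => hex.surj _ (uPt k ι (S n))
  let f : ℕ → E.obj (MvPolynomial ι k) := fun n => (hfex n).choose
  have hf : ∀ n, pi.app (MvPolynomial ι k) (f n) = uPt k ι (S n) :=
    fun n => (hfex n).choose_spec
  have hEcomp : ∀ {A B C : Type u} [CommRing A] [Algebra k A] [CommRing B] [Algebra k B]
      [CommRing C] [Algebra k C] (g : B →ₐ[k] C) (h : A →ₐ[k] B) (x : E.obj A),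
      E.map g (E.map h x) = E.map (g.comp h) x := by
    intro A B C _ _ _ _ _ _ g h x
    rw [E.map_comp]; rfl
  have hrr : ∀ {a b : ℕ}, a ≤ b → ∀ x : E.obj (MvPolynomial ι k),
      E.map (rTr k ι (S a)) (E.map (rTr k ι (S b)) x) = E.map (rTr k ι (S a)) x := by
    intro a b hab x
    rw [hEcomp, rTr_comp (hS hab)]
  have hrr' : ∀ {a b : ℕ}, a ≤ b → ∀ x : E.obj (MvPolynomial ι k),
      E.map (rTr k ι (S b)) (E.map (rTr k ι (S a)) x) = E.map (rTr k ι (S a)) x := by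
    intro a b hab x
    rw [hEcomp, rTr_comp' (hS hab)]
  let P : ℕ → E.obj (MvPolynomial ι k) → Prop := fun n e =>
    pi.app (MvPolynomial ι k) e = uPt k ι (S n) ∧ E.map (rTr k ι (S n)) e = e
  have hbase : P 0 (E.map (rTr k ι (S 0)) (f 0)) := by
    constructor
    · rw [← pi.naturality, hf, map_rTr_uPt_ge (Finset.Subset.refl _)]
    · exact hrr le_rfl _
  have hstep : ∀ n (e : E.obj (MvPolynomial ι k)), P n e →
      P (n + 1) (E.map (rTr k ι (S (n + 1))) (f (n + 1)) + e
        - E.map (rTr k ι (S n)) (E.map (rTr k ι (S (n + 1))) (f (n + 1)))) := by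
    intro n e he
    obtain ⟨he1, he2⟩ := he
    have hπA : pi.app (MvPolynomial ι k) (E.map (rTr k ι (S (n + 1))) (f (n + 1)))
        = uPt k ι (S (n + 1)) := by
      rw [← pi.naturality, hf, map_rTr_uPt_ge (Finset.Subset.refl _)]
    have hπrA : pi.app (MvPolynomial ι k)
        (E.map (rTr k ι (S n)) (E.map (rTr k ι (S (n + 1))) (f (n + 1))))
        = uPt k ι (S n) := by
      rw [← pi.naturality, hπA, map_rTr_uPt_le (hS (Nat.le_succ n))]
    constructor
    · rw [map_sub, map_add, hπA, he1, hπrA]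
      exact add_sub_cancel_right _ _
    · have h1 : E.map (rTr k ι (S (n + 1))) (E.map (rTr k ι (S (n + 1))) (f (n + 1)))
          = E.map (rTr k ι (S (n + 1))) (f (n + 1)) := hrr le_rfl _
      have h2 : E.map (rTr k ι (S (n + 1))) e = e := by
        conv_lhs => rw [← he2]
        rw [hrr' (Nat.le_succ n), he2]
      have h3 : E.map (rTr k ι (S (n + 1)))
            (E.map (rTr k ι (S n)) (E.map (rTr k ι (S (n + 1))) (f (n + 1))))
          = E.map (rTr k ι (S n)) (E.map (rTr k ι (S (n + 1))) (f (n + 1))) :=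
        hrr' (Nat.le_succ n) _
      rw [map_sub, map_add, h1, h2, h3]
  let eseq : ∀ n : ℕ, {e : E.obj (MvPolynomial ι k) // P n e} := fun n =>
    Nat.rec ⟨_, hbase⟩ (fun m prev => ⟨_, hstep m prev.1 prev.2⟩) n
  have hcompat : ∀ n, E.map (rTr k ι (S n)) (eseq (n + 1)).1 = (eseq n).1 := by
    intro n
    have hval : (eseq (n + 1)).1 = E.map (rTr k ι (S (n + 1))) (f (n + 1)) + (eseq n).1
        - E.map (rTr k ι (S n)) (E.map (rTr k ι (S (n + 1))) (f (n + 1))) := rfl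
    rw [hval, map_sub, map_add, (eseq n).2.2, hrr (le_refl n)]
    exact add_sub_cancel_left _ _
  have hcross : ∀ {n m : ℕ}, n ≤ m → E.map (rTr k ι (S n)) (eseq m).1 = (eseq n).1 := by
    intro n m h
    induction h with
    | refl => exact (eseq n).2.2
    | @step m h ih =>
      calc E.map (rTr k ι (S n)) (eseq (m + 1)).1
          = E.map (rTr k ι (S n)) (E.map (rTr k ι (S m)) (eseq (m + 1)).1) := (hrr h _).symm
        _ = E.map (rTr k ι (S n)) (eseq m).1 := by rw [hcompat m]
        _ = (eseq n).1 := ih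
  let val : ∀ (B : Type u) [CommRing B] [Algebra k B], (Ga k ι).obj B → ℕ → E.obj B :=
    fun B _ _ x n => E.map (phiX k ι (toFs k ι x)) (eseq n).1
  have hval_mono : ∀ (B : Type u) [CommRing B] [Algebra k B] (x : (Ga k ι).obj B)
      {n m : ℕ}, n ≤ m → (toFs k ι x).support ⊆ S n → val B x m = val B x n := by
    intro B _ _ x n m hnm hsupp
    show E.map _ (eseq m).1 = E.map _ (eseq n).1
    rw [← hcross hnm, hEcomp, phiX_comp_rTr hsupp]
  have hval_eq : ∀ (B : Type u) [CommRing B] [Algebra k B] (x : (Ga k ι).obj B)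
      {n m : ℕ}, (toFs k ι x).support ⊆ S n → (toFs k ι x).support ⊆ S m →
      val B x n = val B x m := by
    intro B _ _ x n m hn hm
    rcases le_total n m with h | h
    · exact (hval_mono B x h hn).symm
    · exact hval_mono B x h hm
  refine ⟨⟨fun B _ _ x => val B x ((hcov (toFs k ι x).support).choose), ?_⟩, ?_⟩
  · intro B C _ _ _ _ g x
    beta_reduce
    have hsn : (toFs k ι x).support ⊆ S ((hcov (toFs k ι x).support).choose) :=
      (hcov _).choose_spec
    have hsm : (toFs k ι ((Ga k ι).map g x)).support
        ⊆ S ((hcov (toFs k ι ((Ga k ι).map g x)).support).choose) := (hcov _).choose_spec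
    have hsm' : (toFs k ι ((Ga k ι).map g x)).support
        ⊆ S ((hcov (toFs k ι x).support).choose) :=
      Finset.Subset.trans (Ga_map_support k ι g x) hsn
    have hswap := hval_eq C ((Ga k ι).map g x) hsm' hsm
    rw [← hswap]
    show E.map g (E.map (phiX k ι (toFs k ι x)) _) =
      E.map (phiX k ι (toFs k ι ((Ga k ι).map g x))) _
    rw [hEcomp, phiX_map]
  · intro B _ _ x
    beta_reduce
    have hsn : (toFs k ι x).support ⊆ S ((hcov (toFs k ι x).support).choose) :=
      (hcov _).choose_spec
    show pi.app B (E.map (phiX k ι (toFs k ι x)) (eseq _).1) = x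
    rw [← pi.naturality, (eseq _).2.1, map_phiX_uPt hsn]

end GaSection
section Strict

variable {k : Type u} [Field k]

lemma ga_section_iso {ι : Type u} (S : ℕ → Finset ι) (hS : ∀ {a b : ℕ}, a ≤ b → S a ⊆ S b)
    (hcov : ∀ t : Finset ι, ∃ n, t ⊆ S n)
    {F E V : AbFunctor k} (ψ : AbIso k V (Ga k ι))
    (i : AbHom k F E) (pi : AbHom k E V) (hex : IsShortExact k i pi) :
    ∃ σ : SetHom k V E, ∀ (B : Type u) [CommRing B] [Algebra k B]
      (x : V.obj B), pi.app B (σ.app B x) = x := by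
  classical
  -- ψ.hom is injective on each object
  have hinj : ∀ (B : Type u) [CommRing B] [Algebra k B], Function.Injective (ψ.hom.app B) := by
    intro B _ _ a b h
    have := congrArg (ψ.inv.app B) h
    rwa [ψ.hom_inv, ψ.hom_inv] at this
  let pi' : AbHom k E (Ga k ι) :=
    { app := fun B _ _ => (ψ.hom.app B).comp (pi.app B)
      naturality := by
        intro B C _ _ _ _ f x
        simp only [AddMonoidHom.comp_apply]
        rw [ψ.hom.naturality, pi.naturality] }
  have hex' : IsShortExact k i pi' := by
    constructor
    · exact hex.inj
    · intro B _ _ y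
      obtain ⟨e, he⟩ := hex.surj B (ψ.inv.app B y)
      exact ⟨e, by show ψ.hom.app B (pi.app B e) = y; rw [he, ψ.inv_hom]⟩
    · intro B _ _ x
      rw [← hex.exact B x]
      constructor
      · intro h
        have h' : ψ.hom.app B (pi.app B x) = ψ.hom.app B 0 := by
          rw [map_zero]; exact h
        exact hinj B h'
      · intro h
        show ψ.hom.app B (pi.app B x) = 0
        rw [h, map_zero]
  obtain ⟨σ', hσ'⟩ := ga_section S hS hcov i pi' hex'
  refine ⟨⟨fun B _ _ v => σ'.app B (ψ.hom.app B v), ?_⟩, ?_⟩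
  · intro B C _ _ _ _ f v
    rw [σ'.naturality, ψ.hom.naturality]
  · intro B _ _ v
    have h := hσ' B (ψ.hom.app B v)
    have h' : ψ.hom.app B (pi.app B (σ'.app B (ψ.hom.app B v))) = ψ.hom.app B v := h
    have := congrArg (ψ.inv.app B) h'
    rwa [ψ.hom_inv, ψ.hom_inv] at this

lemma strict_section {F E V : AbFunctor k} (hV : IsStrictlyAdditive k V)
    (i : AbHom k F E) (pi : AbHom k E V) (hex : IsShortExact k i pi) :
    ∃ σ : SetHom k V E, ∀ (B : Type u) [CommRing B] [Algebra k B]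
      (x : V.obj B), pi.app B (σ.app B x) = x := by
  classical
  rcases hV with ⟨n, hψ⟩ | hψ <;> obtain ⟨ψ⟩ := hψ
  · exact ga_section_iso (fun _ => (Finset.univ : Finset (ULift.{u} (Fin n))))
      (fun _ => Finset.Subset.refl _) (fun t => ⟨0, Finset.subset_univ t⟩) ψ i pi hex
  · refine ga_section_iso
      (fun n => (Finset.range n).map ⟨ULift.up, fun a b h => congrArg ULift.down h⟩)
      ?_ ?_ ψ i pi hex
    · intro a b hab
      exact Finset.map_subset_map.mpr (Finset.range_subset_range.mpr hab)
    · intro t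
      refine ⟨(t.sup fun j => j.down) + 1, ?_⟩
      intro j hj
      rw [Finset.mem_map]
      refine ⟨j.down, Finset.mem_range.mpr (Nat.lt_succ_of_le (Finset.le_sup hj)), rfl⟩

end Strict
section Ext

variable {k : Type u} [Field k]

/-- The preimage subfunctor `π⁻¹(iV(V')) ⊆ E`. -/
def pullSub {V' V E : AbFunctor k} (iV : AbHom k V' V) (pi : AbHom k E V) : AbFunctor k where
  obj B _ _ := ↥((iV.app B).range.comap (pi.app B))
  grp B _ _ := inferInstance
  map {B C} _ _ _ _ f :=
    AddMonoidHom.codRestrict ((E.map f).comp (AddSubgroup.subtype _)) _ (by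
      rintro ⟨x, hx⟩
      rw [AddSubgroup.mem_comap] at hx
      obtain ⟨v, hv⟩ := AddMonoidHom.mem_range.mp hx
      rw [AddSubgroup.mem_comap]
      refine AddMonoidHom.mem_range.mpr ⟨V'.map f v, ?_⟩
      show iV.app C (V'.map f v) = pi.app C (E.map f x)
      rw [← iV.naturality, hv, pi.naturality])
  map_id B _ _ := by
    apply AddMonoidHom.ext
    rintro ⟨x, hx⟩
    apply Subtype.ext
    show E.map (AlgHom.id k B) x = x
    rw [E.map_id]; rfl
  map_comp {B C D} _ _ _ _ _ _ f g := by
    apply AddMonoidHom.ext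
    rintro ⟨x, hx⟩
    apply Subtype.ext
    show E.map (g.comp f) x = E.map g (E.map f x)
    rw [E.map_comp]; rfl

/-- The inclusion of the preimage subfunctor into `E`. -/
def pullSubHom {V' V E : AbFunctor k} (iV : AbHom k V' V) (pi : AbHom k E V) :
    AbHom k (pullSub iV pi) E where
  app B _ _ := ((iV.app B).range.comap (pi.app B)).subtype
  naturality {B C} _ _ _ _ f x := rfl

lemma pullSubHom_inj {V' V E : AbFunctor k} (iV : AbHom k V' V) (pi : AbHom k E V)
    (B : Type u) [CommRing B] [Algebra k B] :
    Function.Injective ((pullSubHom iV pi).app B) := fun a b h => Subtype.ext h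

lemma pullSub_exists {V' V E : AbFunctor k} (iV : AbHom k V' V) (pi : AbHom k E V)
    (B : Type u) [CommRing B] [Algebra k B] (e : (pullSub iV pi).obj B) :
    ∃ v, iV.app B v = pi.app B ((pullSubHom iV pi).app B e) := by
  obtain ⟨x, hx⟩ := e
  rw [AddSubgroup.mem_comap] at hx
  exact AddMonoidHom.mem_range.mp hx

def pullSubMk {V' V E : AbFunctor k} (iV : AbHom k V' V) (pi : AbHom k E V)
    (B : Type u) [CommRing B] [Algebra k B] (e : E.obj B)
    (h : ∃ v, iV.app B v = pi.app B e) : (pullSub iV pi).obj B :=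
  ⟨e, by rw [AddSubgroup.mem_comap]; exact AddMonoidHom.mem_range.mpr h⟩

lemma pullSubHom_mk {V' V E : AbFunctor k} (iV : AbHom k V' V) (pi : AbHom k E V)
    (B : Type u) [CommRing B] [Algebra k B] (e : E.obj B)
    (h : ∃ v, iV.app B v = pi.app B e) :
    (pullSubHom iV pi).app B (pullSubMk iV pi B e h) = e := rfl

lemma pullSubHom_map {V' V E : AbFunctor k} (iV : AbHom k V' V) (pi : AbHom k E V)
    {B C : Type u} [CommRing B] [Algebra k B] [CommRing C] [Algebra k C]
    (f : B →ₐ[k] C) (e : (pullSub iV pi).obj B) :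
    (pullSubHom iV pi).app C ((pullSub iV pi).map f e)
      = E.map f ((pullSubHom iV pi).app B e) := rfl

end Ext
section Main

variable {k : Type u} [Field k]

lemma additive_section {V : AbFunctor k} (hV : IsAdditive k V) :
    ∀ {F E : AbFunctor k} (i : AbHom k F E) (pi : AbHom k E V),
      IsShortExact k i pi →
      ∃ σ : SetHom k V E, ∀ (B : Type u) [CommRing B] [Algebra k B] (x : V.obj B),
        pi.app B (σ.app B x) = x := by
  induction hV with
  | of_strict W hW =>
    intro F E i pi hex
    exact strict_section hW i pi hex
  | @of_ext V' W V'' iV pV hseV hadd hstr ih =>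
    intro F E i pi hex
    classical
    have hinv : ∀ (B : Type u) [CommRing B] [Algebra k B] (y : W.obj B),
        (∃ v, iV.app B v = y) →
        iV.app B (Function.invFun (iV.app B) y) = y :=
      fun B _ _ y hy => Function.invFun_eq hy
    -- the quotient short exact sequence  0 → pullSub → E → V'' → 0
    let pi'' : AbHom k E V'' :=
      { app := fun B _ _ => (pV.app B).comp (pi.app B)
        naturality := by
          intro B C _ _ _ _ f x
          simp only [AddMonoidHom.comp_apply]
          rw [pV.naturality, pi.naturality] }
    have hex'' : IsShortExact k (pullSubHom iV pi) pi'' := by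
      constructor
      · exact pullSubHom_inj iV pi
      · intro B _ _ v''
        obtain ⟨v, hv⟩ := hseV.surj B v''
        obtain ⟨e, he⟩ := hex.surj B v
        exact ⟨e, by show pV.app B (pi.app B e) = v''; rw [he, hv]⟩
      · intro B _ _ x
        constructor
        · intro h
          have h' : pi.app B x ∈ Set.range (iV.app B) :=
            (hseV.exact B (pi.app B x)).mp h
          obtain ⟨v', hv'⟩ := h'
          exact ⟨pullSubMk iV pi B x ⟨v', hv'⟩, rfl⟩
        · rintro ⟨e, rfl⟩
          show pV.app B (pi.app B ((pullSubHom iV pi).app B e)) = 0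
          obtain ⟨v', hv'⟩ := pullSub_exists iV pi B e
          rw [← hv']
          exact (hseV.exact B (iV.app B v')).mpr ⟨v', rfl⟩
    obtain ⟨τ, hτ⟩ := strict_section hstr (pullSubHom iV pi) pi'' hex''
    -- the kernel short exact sequence  0 → F → pullSub → V' → 0
    let i' : AbHom k F (pullSub iV pi) :=
      { app := fun B _ _ => AddMonoidHom.codRestrict (i.app B) _ (by
          intro x
          rw [AddSubgroup.mem_comap]
          refine AddMonoidHom.mem_range.mpr ⟨0, ?_⟩
          have h0 : pi.app B (i.app B x) = 0 := (hex.exact B _).mpr ⟨x, rfl⟩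
          rw [map_zero, h0])
        naturality := by
          intro B C _ _ _ _ f x
          apply pullSubHom_inj iV pi C
          rw [pullSubHom_map]
          show E.map f (i.app B x) = i.app C (F.map f x)
          exact i.naturality f x }
    let p' : AbHom k (pullSub iV pi) V' :=
      { app := fun B _ _ => AddMonoidHom.mk'
          (fun e => Function.invFun (iV.app B)
            (pi.app B ((pullSubHom iV pi).app B e)))
          (by
            intro a b
            apply hseV.inj B
            show iV.app B (Function.invFun (iV.app B)
                (pi.app B ((pullSubHom iV pi).app B (a + b))))
              = iV.app B (Function.invFun (iV.app B)
                  (pi.app B ((pullSubHom iV pi).app B a))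
                + Function.invFun (iV.app B) (pi.app B ((pullSubHom iV pi).app B b)))
            rw [hinv B _ (pullSub_exists iV pi B (a + b)), map_add (iV.app B),
              hinv B _ (pullSub_exists iV pi B a), hinv B _ (pullSub_exists iV pi B b),
              ← map_add (pi.app B), ← map_add ((pullSubHom iV pi).app B)])
        naturality := by
          intro B C _ _ _ _ f e
          apply hseV.inj C
          show iV.app C (V'.map f (Function.invFun (iV.app B)
              (pi.app B ((pullSubHom iV pi).app B e))))
            = iV.app C (Function.invFun (iV.app C)
              (pi.app C ((pullSubHom iV pi).app C ((pullSub iV pi).map f e))))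
          rw [← iV.naturality, hinv B _ (pullSub_exists iV pi B e),
            hinv C _ (pullSub_exists iV pi C _), pullSubHom_map, ← pi.naturality] }
    have hex' : IsShortExact k i' p' := by
      constructor
      · intro B _ _ a b h
        exact hex.inj B (congrArg ((pullSubHom iV pi).app B) h)
      · intro B _ _ v'
        obtain ⟨x, hx⟩ := hex.surj B (iV.app B v')
        refine ⟨pullSubMk iV pi B x ⟨v', hx.symm⟩, ?_⟩
        apply hseV.inj B
        show iV.app B (Function.invFun (iV.app B) _) = iV.app B v'
        rw [hinv B _ (pullSub_exists iV pi B _), pullSubHom_mk, hx]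
      · intro B _ _ e
        constructor
        · intro h
          have h0 : pi.app B ((pullSubHom iV pi).app B e) = 0 := by
            rw [← hinv B _ (pullSub_exists iV pi B e)]
            show iV.app B (p'.app B e) = 0
            rw [h, map_zero]
          obtain ⟨x, hx⟩ := (hex.exact B _).mp h0
          refine ⟨x, ?_⟩
          apply pullSubHom_inj iV pi B
          exact hx
        · rintro ⟨x, rfl⟩
          apply hseV.inj B
          show iV.app B (Function.invFun (iV.app B) _) = iV.app B 0
          rw [hinv B _ (pullSub_exists iV pi B _), map_zero]
          show pi.app B (i.app B x) = 0
          exact (hex.exact B _).mpr ⟨x, rfl⟩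
    obtain ⟨σ', hσ'⟩ := ih i' p' hex'
    have hπσ' : ∀ (B : Type u) [CommRing B] [Algebra k B] (v' : V'.obj B),
        pi.app B ((pullSubHom iV pi).app B (σ'.app B v')) = iV.app B v' := by
      intro B _ _ v'
      have h := hσ' B v'
      calc pi.app B ((pullSubHom iV pi).app B (σ'.app B v'))
          = iV.app B (p'.app B (σ'.app B v')) :=
            (hinv B _ (pullSub_exists iV pi B (σ'.app B v'))).symm
        _ = iV.app B v' := by rw [h]
    have hd : ∀ (B : Type u) [CommRing B] [Algebra k B] (v : W.obj B),
        ∃ v0, iV.app B v0 = v - pi.app B (τ.app B (pV.app B v)) := by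
      intro B _ _ v
      have h2 : pV.app B (pi.app B (τ.app B (pV.app B v))) = pV.app B v := hτ B (pV.app B v)
      have h1 : pV.app B (v - pi.app B (τ.app B (pV.app B v))) = 0 := by
        rw [map_sub, h2, sub_self]
      exact (hseV.exact B _).mp h1
    have hkey : ∀ (B : Type u) [CommRing B] [Algebra k B] (v : W.obj B),
        iV.app B (Function.invFun (iV.app B) (v - pi.app B (τ.app B (pV.app B v))))
          = v - pi.app B (τ.app B (pV.app B v)) :=
      fun B _ _ v => hinv B _ (hd B v)
    refine ⟨⟨fun B _ _ v =>
      (pullSubHom iV pi).app B (σ'.app B (Function.invFun (iV.app B)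
        (v - pi.app B (τ.app B (pV.app B v))))) + τ.app B (pV.app B v), ?_⟩, ?_⟩
    · intro B C _ _ _ _ f v
      beta_reduce
      have hw : E.map f (τ.app B (pV.app B v)) = τ.app C (pV.app C (W.map f v)) := by
        rw [τ.naturality, pV.naturality]
      have hdmap : iV.app C (V'.map f (Function.invFun (iV.app B)
            (v - pi.app B (τ.app B (pV.app B v)))))
          = W.map f v - pi.app C (τ.app C (pV.app C (W.map f v))) := by
        rw [← iV.naturality, hkey B v, map_sub, pi.naturality, hw]
      have hvmap : V'.map f (Function.invFun (iV.app B)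
            (v - pi.app B (τ.app B (pV.app B v))))
          = Function.invFun (iV.app C)
            (W.map f v - pi.app C (τ.app C (pV.app C (W.map f v)))) := by
        apply hseV.inj C
        rw [hdmap, hinv C _ ⟨_, hdmap⟩]
      have hsig : E.map f ((pullSubHom iV pi).app B (σ'.app B (Function.invFun (iV.app B)
            (v - pi.app B (τ.app B (pV.app B v))))))
          = (pullSubHom iV pi).app C (σ'.app C (Function.invFun (iV.app C)
            (W.map f v - pi.app C (τ.app C (pV.app C (W.map f v)))))) := by
        rw [(pullSubHom iV pi).naturality, σ'.naturality, hvmap]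
      rw [map_add, hsig, hw]
    · intro B _ _ v
      beta_reduce
      rw [map_add, hπσ' B _, hkey B v]
      exact sub_add_cancel v _

end Main

/-- Every extension of an additive functor `V` by any functor `F` is
set-theoretically split. -/
theorem additive_extension_set_split {k : Type u} [Field k] {F E V : AbFunctor k}
    (hV : IsAdditive k V) (i : AbHom k F E) (pi : AbHom k E V)
    (hex : IsShortExact k i pi) :
    ∃ σ : SetHom k V E, ∀ (B : Type u) [CommRing B] [Algebra k B] (x : V.obj B),
      pi.app B (σ.app B x) = x := by
  exact additive_section hV i pi hex
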